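/- Let $\mu$ be a Borel measure on $\mathbb{R}^n$ with $\mu(B(x,r)) \le C r^m$ for all $x, r$. Let $s_t(x,y)$ satisfy the Hölder condition $|s_t(x,y) - s_t(x,z)| \le C\frac{|y-z|^\alpha}{(t+|x-y|)^{m+\alpha}}$ for $|y-z| < t/2$. Let $Q, R$ be cubes with $\ell(Q) < \ell(R)$, let $g \in L^2(\mu)$ be supported on $Q$ with $\int g\,d\mu = 0$, and let $(x,t) \in R \times (\ell(R)/2, \ell(R))$. Then $|\theta_t g(x)| \lesssim \frac{\ell(Q)^{\alpha/2}\ell(R)^{\alpha/2}}{D(Q,R)^{m+\alpha}}\mu(Q)^{1/2}\|g\|_{L^2(\mu)}$, where $\theta_t g(x) = \int s_t(x,y)g(y)\,d\mu(y)$ and $D(Q,R) = \ell(Q) + \ell(R) + d(Q,R)$. -/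

import Mathlib

open MeasureTheory Set
open scoped ENNReal NNReal

/-- An axis-parallel cube in `ℝⁿ` with lower corner `c` and side length `l`. -/
structure RCube (n : ℕ) where
  c : EuclideanSpace ℝ (Fin n)
  l : ℝ

namespace RCube

/-- The underlying set of the cube. -/
def set {n : ℕ} (Q : RCube n) : Set (EuclideanSpace ℝ (Fin n)) :=
  {x | ∀ i, Q.c i ≤ x i ∧ x i ≤ Q.c i + Q.l}

end RCube

/-- The distance `d(S,T)` between two sets. -/
noncomputable def sDist {X : Type*} [PseudoMetricSpace X] (S T : Set X) : ℝ :=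
  sInf {d | ∃ x ∈ S, ∃ y ∈ T, d = dist x y}

/-- The long distance `D(Q,R) = ℓ(Q) + ℓ(R) + d(Q,R)`. -/
noncomputable def DD {n : ℕ} (Q R : RCube n) : ℝ := Q.l + R.l + sDist Q.set R.set

open Filter Topology

lemma RCube.isClosed_set {n : ℕ} (Q : RCube n) : IsClosed Q.set := by
  have h : Q.set = ⋂ i, {x : EuclideanSpace ℝ (Fin n) | Q.c i ≤ x i ∧ x i ≤ Q.c i + Q.l} := by
    ext x; simp [RCube.set, Set.mem_iInter]
  rw [h]
  refine isClosed_iInter fun i => ?_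
  have hc : Continuous fun x : EuclideanSpace ℝ (Fin n) => x i :=
    (EuclideanSpace.proj (𝕜 := ℝ) i).continuous
  exact (isClosed_le continuous_const hc).inter (isClosed_le hc continuous_const)

lemma RCube.mem_nonempty {n : ℕ} (Q : RCube n) (hl : 0 ≤ Q.l) : Q.c ∈ Q.set :=
  fun i => ⟨le_refl _, by linarith⟩

lemma RCube.dist_le {n : ℕ} (Q : RCube n) (hl : 0 ≤ Q.l) {y z : EuclideanSpace ℝ (Fin n)}
    (hy : y ∈ Q.set) (hz : z ∈ Q.set) : dist y z ≤ Real.sqrt n * Q.l := by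
  rw [EuclideanSpace.dist_eq]
  have hsum : (∑ i, dist (y i) (z i) ^ 2) ≤ (n : ℝ) * Q.l ^ 2 := by
    calc (∑ i, dist (y i) (z i) ^ 2) ≤ (Finset.univ.card : ℕ) • (Q.l ^ 2) := by
          refine Finset.sum_le_card_nsmul _ _ _ fun i _ => ?_
          have h1 := (hy i).1; have h2 := (hy i).2
          have h3 := (hz i).1; have h4 := (hz i).2
          have : |y i - z i| ≤ Q.l := abs_le.mpr ⟨by linarith, by linarith⟩
          calc dist (y i) (z i) ^ 2 = |y i - z i| ^ 2 := by rw [Real.dist_eq]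
            _ ≤ Q.l ^ 2 := by nlinarith [abs_nonneg (y i - z i)]
      _ = (n : ℝ) * Q.l ^ 2 := by simp [nsmul_eq_mul]
  calc Real.sqrt (∑ i, dist (y i) (z i) ^ 2) ≤ Real.sqrt ((n : ℝ) * Q.l ^ 2) :=
        Real.sqrt_le_sqrt hsum
    _ = Real.sqrt n * Q.l := by
        rw [Real.sqrt_mul (Nat.cast_nonneg n), Real.sqrt_sq hl]

lemma RCube.seg_mem {n : ℕ} (Q : RCube n) {y : EuclideanSpace ℝ (Fin n)} (hy : y ∈ Q.set)
    {θ : ℝ} (h0 : 0 ≤ θ) (h1 : θ ≤ 1) : Q.c + θ • (y - Q.c) ∈ Q.set := by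
  intro i
  have hyi := hy i
  have hcoord : (Q.c + θ • (y - Q.c)) i = Q.c i + θ * (y i - Q.c i) := rfl
  rw [hcoord]
  constructor
  · nlinarith [hyi.1]
  · nlinarith [hyi.1, hyi.2]

lemma sDist_le {X : Type*} [PseudoMetricSpace X] {S T : Set X} {a b : X}
    (ha : a ∈ S) (hb : b ∈ T) : sDist S T ≤ dist a b :=
  csInf_le ⟨0, fun d ⟨x, _, y, _, hd⟩ => hd ▸ dist_nonneg⟩ ⟨a, ha, b, hb, rfl⟩

lemma sDist_nonneg {X : Type*} [PseudoMetricSpace X] (S T : Set X) : 0 ≤ sDist S T :=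
  Real.sInf_nonneg fun d ⟨x, _, y, _, hd⟩ => hd ▸ dist_nonneg

section lemmas
variable {E : Type*} [NormedAddCommGroup E] [NormedSpace ℝ E]

lemma cont_of_holder {E : Type*} [PseudoMetricSpace E] (f : E → ℝ) (C α β t : ℝ)
    (hα : 0 < α) (hβ : 0 ≤ β) (hC : 0 ≤ C) (ht : 0 < t) (x : E)
    (hf : ∀ a b : E, dist a b < t / 2 → |f a - f b| ≤ C * dist a b ^ α / (t + dist x a) ^ β) :
    Continuous f := by
  rw [continuous_iff_continuousAt]
  intro y₀
  rw [ContinuousAt, tendsto_iff_dist_tendsto_zero]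
  have h1 : Tendsto (fun y : E => dist y y₀) (𝓝 y₀) (𝓝 0) := by
    have := (Continuous.dist (continuous_id : Continuous fun y : E => y) (continuous_const (y := y₀))).tendsto y₀
    simpa using this
  have h2 : Tendsto (fun y : E => dist y y₀ ^ α) (𝓝 y₀) (𝓝 0) := by
    have h3 : ContinuousAt (fun d : ℝ => d ^ α) 0 :=
      Real.continuousAt_rpow_const 0 α (Or.inr hα.le)
    have := h3.tendsto.comp h1
    simpa [Function.comp_def, Real.zero_rpow hα.ne'] using this
  have hbound : Tendsto (fun y : E => C * dist y y₀ ^ α / t ^ β) (𝓝 y₀) (𝓝 0) := by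
    have := (h2.const_mul C).div_const (t ^ β)
    simpa using this
  apply squeeze_zero' (Eventually.of_forall fun y => dist_nonneg) ?_ hbound
  filter_upwards [Metric.ball_mem_nhds y₀ (half_pos ht)] with y hy
  rw [Real.dist_eq]
  refine (hf y y₀ (by simpa [Metric.mem_ball] using hy)).trans ?_
  gcongr
  linarith [dist_nonneg (x := x) (y := y)]

lemma telescope (f : E → ℝ) (C α β t d0 : ℝ) (hC : 0 ≤ C) (hα : 0 < α) (hβ : 0 ≤ β)
    (ht : 0 < t) (hd0 : 0 ≤ d0) (x c y : E) (N : ℕ) (hN : 0 < N)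
    (hf : ∀ a b : E, dist a b < t / 2 → |f a - f b| ≤ C * dist a b ^ α / (t + dist x a) ^ β)
    (hseg : ∀ θ : ℝ, 0 ≤ θ → θ ≤ 1 → d0 ≤ dist x (c + θ • (y - c)))
    (hstep : dist y c / N < t / 2) :
    |f y - f c| ≤ N * (C * (dist y c / N) ^ α / (t + d0) ^ β) := by
  have hNR : (0:ℝ) < N := Nat.cast_pos.mpr hN
  set p : ℕ → E := fun k => c + ((k : ℝ) / N) • (y - c) with hp
  have hp0 : p 0 = c := by simp [hp]
  have hpN : p N = y := by
    simp [hp, div_self hNR.ne']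
  have hdistp : ∀ k : ℕ, dist (p (k + 1)) (p k) = dist y c / N := by
    intro k
    have hsub : p (k + 1) - p k = ((1 : ℝ) / N) • (y - c) := by
      simp only [hp]
      rw [add_sub_add_left_eq_sub, ← sub_smul]
      congr 1
      push_cast
      ring
    rw [dist_eq_norm, hsub, norm_smul, dist_eq_norm]
    rw [Real.norm_eq_abs, abs_div, abs_one, Nat.abs_cast]
    ring
  have hmem : ∀ k : ℕ, k ≤ N → d0 ≤ dist x (p k) := by
    intro k hk
    exact hseg ((k : ℝ) / N) (div_nonneg (Nat.cast_nonneg k) hNR.le)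
      ((div_le_one hNR).mpr (by exact_mod_cast hk))
  have hterm : ∀ k, k < N → |f (p (k + 1)) - f (p k)| ≤
      C * (dist y c / N) ^ α / (t + d0) ^ β := by
    intro k hk
    have h1 := hf (p (k + 1)) (p k) (by rw [hdistp]; exact hstep)
    rw [hdistp] at h1
    refine h1.trans ?_
    gcongr
    exact hmem (k + 1) hk
  calc |f y - f c| = |∑ k ∈ Finset.range N, (f (p (k + 1)) - f (p k))| := by
        rw [Finset.sum_range_sub (fun k => f (p k)) N, hp0, hpN]
    _ ≤ ∑ k ∈ Finset.range N, |f (p (k + 1)) - f (p k)| := Finset.abs_sum_le_sum_abs _ _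
    _ ≤ ∑ _k ∈ Finset.range N, (C * (dist y c / N) ^ α / (t + d0) ^ β) :=
        Finset.sum_le_sum fun k hk => hterm k (Finset.mem_range.mp hk)
    _ = N * (C * (dist y c / N) ^ α / (t + d0) ^ β) := by
        rw [Finset.sum_const, Finset.card_range, nsmul_eq_mul]

end lemmas

/-- Standard estimate for the action of a square-function kernel on a
mean-zero function `g` supported on a cube `Q` smaller than `R`, at Whitney points
`(x,t) ∈ W_R`:
`|θ_t g(x)| ≲ ℓ(Q)^{α/2} ℓ(R)^{α/2} D(Q,R)^{-(m+α)} μ(Q)^{1/2} ‖g‖_{L²(μ)}`. -/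
theorem stmt8 (n : ℕ) (m α C : ℝ) (hm : 0 < m) (hα : 0 < α) (hC : 0 < C) :
    ∃ C' : ℝ, 0 < C' ∧
    ∀ (μ : Measure (EuclideanSpace ℝ (Fin n)))
      (s : ℝ → EuclideanSpace ℝ (Fin n) → EuclideanSpace ℝ (Fin n) → ℝ),
    (∀ x r, 0 < r → μ (Metric.ball x r) ≤ ENNReal.ofReal (C * r ^ m)) →
    (∀ t x y z, 0 < t → dist y z < t / 2 →
      |s t x y - s t x z| ≤ C * (dist y z) ^ α / (t + dist x y) ^ (m + α)) →
    ∀ (Q R : RCube n), 0 < Q.l → 0 < R.l → Q.l < R.l →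
    ∀ g : EuclideanSpace ℝ (Fin n) → ℝ,
    (∀ y ∉ Q.set, g y = 0) → MemLp g 2 μ → (∫ y, g y ∂μ) = 0 →
    ∀ x ∈ R.set, ∀ t ∈ Ioo (R.l / 2) R.l,
    |∫ y, s t x y * g y ∂μ|
      ≤ C' * (Q.l ^ (α / 2) * R.l ^ (α / 2) / (DD Q R) ^ (m + α))
        * Real.sqrt (μ Q.set).toReal * Real.sqrt (∫ y, (g y) ^ 2 ∂μ) := by
  have h4β : (0:ℝ) < 4 ^ (m + α) := Real.rpow_pos_of_pos (by norm_num) _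
  refine ⟨(4 * n + 4) * C * 4 ^ (m + α), ?_, ?_⟩
  · exact mul_pos (mul_pos (by positivity) hC) h4β
  intro μ s hgrow hHolder Q R hQl hRl hQR g hsupp hg2 hmean x hx t ht
  obtain ⟨ht1, ht2⟩ := ht
  have ht0 : 0 < t := lt_trans (by positivity) ht1
  have hβ0 : 0 < m + α := by linarith
  set d := sDist Q.set R.set with hd
  have hd0 : 0 ≤ d := sDist_nonneg _ _
  have hDDeq : DD Q R = Q.l + R.l + d := rfl
  have hDD : 0 < DD Q R := by rw [hDDeq]; linarith
  have hQmeas : MeasurableSet Q.set := Q.isClosed_set.measurableSet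
  have hμQ : μ Q.set ≠ ⊤ := by
    have hsub : Q.set ⊆ Metric.ball Q.c (Real.sqrt n * Q.l + 1) := by
      intro y hy
      have := Q.dist_le hQl.le hy (Q.mem_nonempty hQl.le)
      exact Metric.mem_ball.mpr (by linarith)
    have hpos : 0 < Real.sqrt n * Q.l + 1 := by positivity
    exact ne_top_of_le_ne_top ENNReal.ofReal_ne_top
      ((measure_mono hsub).trans (hgrow _ _ hpos))
  -- integrability of g
  have hgInt : Integrable g μ := by
    have hfin : IsFiniteMeasure (μ.restrict Q.set) :=
      ⟨by rw [Measure.restrict_apply_univ]; exact hμQ.lt_top⟩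
    have h2 : Integrable g (μ.restrict Q.set) := (hg2.restrict _).integrable one_le_two
    have hgind : Q.set.indicator g = g := by
      funext y; by_cases hy : y ∈ Q.set
      · simp [indicator_of_mem hy]
      · simp [indicator_of_notMem hy, hsupp y hy]
    rw [← hgind]; exact (integrable_indicator_iff hQmeas).mpr h2
  -- the constant
  set K : ℝ := ((4 * n + 4) * C * 4 ^ (m + α)) *
      (Q.l ^ (α / 2) * R.l ^ (α / 2) / DD Q R ^ (m + α)) with hK
  have hDDβ : (0:ℝ) < DD Q R ^ (m + α) := Real.rpow_pos_of_pos hDD _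
  have hK0 : 0 ≤ K := by
    apply mul_nonneg (mul_nonneg (mul_nonneg (by positivity) hC.le) h4β.le)
    exact div_nonneg (mul_nonneg (Real.rpow_nonneg hQl.le _)
      (Real.rpow_nonneg hRl.le _)) hDDβ.le
  have hs' : ∀ a b : EuclideanSpace ℝ (Fin n), dist a b < t / 2 →
      |s t x a - s t x b| ≤ C * dist a b ^ α / (t + dist x a) ^ (m + α) :=
    fun a b hab => hHolder t x a b ht0 hab
  -- key pointwise bound on Q
  have keybound : ∀ y ∈ Q.set, |s t x y - s t x Q.c| ≤ K := by
    intro y hy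
    have hNR : (0:ℝ) < ((4 * n + 4 : ℕ) : ℝ) := by positivity
    have hseg : ∀ θ : ℝ, 0 ≤ θ → θ ≤ 1 → d ≤ dist x (Q.c + θ • (y - Q.c)) := by
      intro θ h0 h1
      rw [dist_comm]
      exact sDist_le (Q.seg_mem hy h0 h1) hx
    have hdyc : dist y Q.c ≤ ((n : ℝ) + 1) * Q.l := by
      have h1 := Q.dist_le hQl.le hy (Q.mem_nonempty hQl.le)
      have h2 : Real.sqrt n ≤ (n : ℝ) + 1 := by
        have h3 := Real.sqrt_le_sqrt (show (n:ℝ) ≤ ((n:ℝ) + 1) ^ 2 by nlinarith [(Nat.cast_nonneg n : (0:ℝ) ≤ n)])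
        rwa [Real.sqrt_sq (by positivity)] at h3
      nlinarith
    have hstep : dist y Q.c / ((4 * n + 4 : ℕ) : ℝ) < t / 2 := by
      rw [div_lt_iff₀ hNR]
      push_cast
      nlinarith [(Nat.cast_nonneg n : (0:ℝ) ≤ n)]
    have htel := telescope (fun y => s t x y) C α (m + α) t d hC.le hα hβ0.le ht0 hd0
      x Q.c y (4 * n + 4) (by positivity) hs' hseg hstep
    refine htel.trans ?_
    have hDD4 : DD Q R / 4 ≤ t + d := by rw [hDDeq]; linarith
    have hnum : dist y Q.c / ((4 * n + 4 : ℕ) : ℝ) ≤ Q.l := by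
      rw [div_le_iff₀ hNR]
      push_cast
      nlinarith [(Nat.cast_nonneg n : (0:ℝ) ≤ n)]
    have step1 : ((4 * n + 4 : ℕ) : ℝ) * (C * (dist y Q.c / ((4 * n + 4 : ℕ) : ℝ)) ^ α
        / (t + d) ^ (m + α)) ≤ ((4 * n + 4 : ℕ) : ℝ) * (C * Q.l ^ α / (DD Q R / 4) ^ (m + α)) := by
      gcongr
    refine step1.trans ?_
    have heq2 : ((4 * n + 4 : ℕ) : ℝ) * (C * Q.l ^ α / (DD Q R / 4) ^ (m + α))
        = ((4 * (n:ℝ) + 4) * C * 4 ^ (m + α)) * (Q.l ^ α / DD Q R ^ (m + α)) := by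
      rw [Real.div_rpow hDD.le (by norm_num : (0:ℝ) ≤ 4), div_div_eq_mul_div]
      push_cast
      ring
    rw [heq2, hK]
    have hQα : Q.l ^ α ≤ Q.l ^ (α / 2) * R.l ^ (α / 2) := by
      have h1 : Q.l ^ α = Q.l ^ (α / 2) * Q.l ^ (α / 2) := by
        rw [← Real.rpow_add hQl]; norm_num
      rw [h1]
      exact mul_le_mul_of_nonneg_left (Real.rpow_le_rpow hQl.le hQR.le (by positivity))
        (Real.rpow_nonneg hQl.le _)
    gcongr
  -- pointwise bound everywhere
  have key : ∀ y, |s t x y - s t x Q.c| * |g y| ≤ K * |g y| := by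
    intro y
    by_cases hy : y ∈ Q.set
    · exact mul_le_mul_of_nonneg_right (keybound y hy) (abs_nonneg _)
    · simp [hsupp y hy]
  -- integrability of the shifted integrand
  have hcont : Continuous (fun y => s t x y) :=
    cont_of_holder _ C α (m + α) t hα hβ0.le hC.le ht0 x hs'
  have hφInt : Integrable (fun y => (s t x y - s t x Q.c) * g y) μ := by
    refine Integrable.mono' ((hgInt.abs).const_mul K)
      (((hcont.sub continuous_const).aestronglyMeasurable).mul hg2.1)
      (Eventually.of_forall fun y => ?_)
    rw [Real.norm_eq_abs, abs_mul]
    exact key y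
  -- mean zero trick
  have heq : ∫ y, s t x y * g y ∂μ = ∫ y, (s t x y - s t x Q.c) * g y ∂μ := by
    have hsplit : (fun y => s t x y * g y)
        = fun y => (s t x y - s t x Q.c) * g y + s t x Q.c * g y := by
      funext y; ring
    rw [hsplit, integral_add hφInt (hgInt.const_mul _), integral_const_mul, hmean,
      mul_zero, add_zero]
  -- Cauchy-Schwarz
  have hCS : ∫ y, |g y| ∂μ ≤ Real.sqrt (μ Q.set).toReal * Real.sqrt (∫ y, (g y) ^ 2 ∂μ) := by
    set f1 : EuclideanSpace ℝ (Fin n) → ℝ := Q.set.indicator fun _ => (1:ℝ) with hf1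
    have h2e : ENNReal.ofReal (2:ℝ) = 2 := by norm_num
    have hfmem : MemLp f1 (ENNReal.ofReal 2) μ := by
      rw [h2e]; exact memLp_indicator_const 2 hQmeas 1 (Or.inr hμQ)
    have hgmem : MemLp g (ENNReal.ofReal 2) μ := by rw [h2e]; exact hg2
    have hCSraw := integral_mul_norm_le_Lp_mul_Lq
      Real.HolderConjugate.two_two hfmem hgmem
    have hL : (fun a => ‖f1 a‖ * ‖g a‖) = fun a => |g a| := by
      funext a; by_cases ha : a ∈ Q.set
      · simp [hf1, indicator_of_mem ha, Real.norm_eq_abs]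
      · simp [hf1, indicator_of_notMem ha, hsupp a ha]
    have hR1 : (fun a => ‖f1 a‖ ^ (2:ℝ)) = Q.set.indicator fun _ => (1:ℝ) := by
      funext a; by_cases ha : a ∈ Q.set
      · simp [hf1, indicator_of_mem ha]
      · simp [hf1, indicator_of_notMem ha, Real.zero_rpow (by norm_num : (2:ℝ) ≠ 0)]
    have hR2 : (fun a => ‖g a‖ ^ (2:ℝ)) = fun a => (g a) ^ 2 := by
      funext a
      rw [show (2:ℝ) = ((2:ℕ):ℝ) by norm_num, Real.rpow_natCast, Real.norm_eq_abs, sq_abs]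
    rw [hL, hR1, hR2, integral_indicator_const (1:ℝ) hQmeas, smul_eq_mul, mul_one] at hCSraw
    rw [Real.sqrt_eq_rpow, Real.sqrt_eq_rpow]
    exact hCSraw
  -- assemble
  calc |∫ y, s t x y * g y ∂μ| = |∫ y, (s t x y - s t x Q.c) * g y ∂μ| := by rw [heq]
    _ ≤ ∫ y, |s t x y - s t x Q.c| * |g y| ∂μ := by
        have := norm_integral_le_integral_norm (μ := μ) (fun y => (s t x y - s t x Q.c) * g y)
        simpa [Real.norm_eq_abs, abs_mul] using this
    _ ≤ ∫ y, K * |g y| ∂μ := by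
        have habs : Integrable (fun y => |s t x y - s t x Q.c| * |g y|) μ := by
          simpa [abs_mul] using hφInt.abs
        exact integral_mono habs ((hgInt.abs).const_mul K) fun y => key y
    _ = K * ∫ y, |g y| ∂μ := integral_const_mul K _
    _ ≤ K * (Real.sqrt (μ Q.set).toReal * Real.sqrt (∫ y, (g y) ^ 2 ∂μ)) :=
        mul_le_mul_of_nonneg_left hCS hK0
    _ = (4 * n + 4) * C * 4 ^ (m + α)
          * (Q.l ^ (α / 2) * R.l ^ (α / 2) / DD Q R ^ (m + α))
          * Real.sqrt (μ Q.set).toReal * Real.sqrt (∫ y, (g y) ^ 2 ∂μ) := by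
        rw [hK]; ring
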